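/- The C-RASP program for PT-3 (rules A := a, B := b, C := c, CA := #A, L1 := 1 ≤ CA, QB := B ∧ L1, CB := #QB, L2 := 1 ≤ CB, QC := C ∧ L2, CC := #QC, L3 := 1 ≤ CC, Out := L3) accepts a nonempty word w over {a,b,c} if and only if there exist indices i < j < k with w[i] = a, w[j] = b, w[k] = c. -/

import Mathlib

/- Letters over Σ = {a, b, c} modeled as `Fin 3`: 0 = a, 1 = b, 2 = c.
   Positions are 1-indexed. -/

/-- Generic prefix count: number of positions `1 ≤ i ≤ j` satisfying `p`. -/
def cnt (p : ℕ → Bool) (j : ℕ) : ℕ := ((Finset.Icc 1 j).filter (fun i => p i = true)).card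

/-- `CA := #A` (`A := a`). -/
def cntA (w : List (Fin 3)) : ℕ → ℕ := cnt (fun i => decide (w[i - 1]? = some 0))

/-- `QB := (B ∧ L1)` with `L1 := 1 ≤ CA`. -/
def QB (w : List (Fin 3)) (i : ℕ) : Bool := decide (w[i - 1]? = some 1 ∧ 1 ≤ cntA w i)

/-- `CB := #QB`. -/
def cntQB (w : List (Fin 3)) : ℕ → ℕ := cnt (QB w)

/-- `QC := (C ∧ L2)` with `L2 := 1 ≤ CB`. -/
def QC (w : List (Fin 3)) (i : ℕ) : Bool := decide (w[i - 1]? = some 2 ∧ 1 ≤ cntQB w i)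

/-- `CC := #QC`. -/
def cntQC (w : List (Fin 3)) : ℕ → ℕ := cnt (QC w)

/-- Acceptance: `Out := L3 := (1 ≤ CC)` at the final position. -/
def acceptsPT3 (w : List (Fin 3)) : Prop := 1 ≤ cntQC w w.length

theorem pt3_correct (w : List (Fin 3)) (hw : w ≠ []) :
    acceptsPT3 w ↔ ∃ i j k : ℕ, i < j ∧ j < k ∧
      w[i]? = some 0 ∧ w[j]? = some 1 ∧ w[k]? = some 2 := by
  have cnt_pos : ∀ (p : ℕ → Bool) (j : ℕ),
      1 ≤ cnt p j ↔ ∃ i, 1 ≤ i ∧ i ≤ j ∧ p i = true := by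
    intro p j
    rw [cnt, Nat.one_le_iff_ne_zero, ← Nat.pos_iff_ne_zero, Finset.card_pos,
      Finset.filter_nonempty_iff]
    simp [Finset.mem_Icc, and_assoc]
  constructor
  · intro h
    rw [acceptsPT3, cntQC, cnt_pos] at h
    obtain ⟨k, hk1, hkn, hkQ⟩ := h
    rw [QC, decide_eq_true_iff] at hkQ
    obtain ⟨hkc, hkb⟩ := hkQ
    rw [cntQB, cnt_pos] at hkb
    obtain ⟨j, hj1, hjk, hjQ⟩ := hkb
    rw [QB, decide_eq_true_iff] at hjQ
    obtain ⟨hjb, hja⟩ := hjQ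
    rw [cntA, cnt_pos] at hja
    obtain ⟨i, hi1, hij, hiQ⟩ := hja
    rw [decide_eq_true_iff] at hiQ
    refine ⟨i - 1, j - 1, k - 1, ?_, ?_, hiQ, hjb, hkc⟩
    · have : i ≠ j := fun h => by rw [h, hjb] at hiQ; simp at hiQ
      omega
    · have : j ≠ k := fun h => by rw [h, hkc] at hjb; simp at hjb
      omega
  · rintro ⟨i, j, k, hij, hjk, ha, hb, hc⟩
    have hk : k < w.length := by
      by_contra h
      rw [List.getElem?_eq_none (by omega)] at hc
      exact Option.some_ne_none _ hc.symm
    rw [acceptsPT3, cntQC, cnt_pos]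
    refine ⟨k + 1, by omega, by omega, ?_⟩
    rw [QC, decide_eq_true_iff]
    refine ⟨by simpa using hc, ?_⟩
    rw [cntQB, cnt_pos]
    refine ⟨j + 1, by omega, by omega, ?_⟩
    rw [QB, decide_eq_true_iff]
    refine ⟨by simpa using hb, ?_⟩
    rw [cntA, cnt_pos]
    exact ⟨i + 1, by omega, by omega, by simpa using ha⟩
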